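/- Under separability, the constraint u_i + v_j ≥ Φ̃_{ij} for all i, j is equivalent to U_{x y} + V_{x y} ≥ Φ_{x y} for all types x, y, where U_{xy} = min over men i of type x of (u_i − ε_{iy}) and V_{xy} = min over women j of type y of (v_j − η_{jx}). -/
import Mathlib


open Finset

/-- Under separability, the individual-level constraints `uᵢ + vⱼ ≥ Φ̃ᵢⱼ` are equivalent to
the type-level constraints `U_{xy} + V_{xy} ≥ Φ_{xy}`, where
`U_{xy} = min_{i : xᵢ = x} (uᵢ − ε_{iy})` and `V_{xy} = min_{j : yⱼ = y} (vⱼ − η_{jx})`. -/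
theorem separability_constraint_equiv
    {I J X Y : Type*} [Fintype I] [Fintype J] [Fintype X] [Fintype Y]
    [DecidableEq X] [DecidableEq Y]
    (xt : I → X) (yt : J → Y)
    (hX : ∀ x : X, ∃ i, xt i = x) (hY : ∀ y : Y, ∃ j, yt j = y)
    (Φ : X → Y → ℝ) (ε : I → Y → ℝ) (η : J → X → ℝ)
    (u : I → ℝ) (v : J → ℝ)
    (U : X → Y → ℝ) (V : X → Y → ℝ)
    (hU : ∀ x y, U x y =
      ({i | xt i = x} : Finset I).inf' ⟨(hX x).choose, by simp [(hX x).choose_spec]⟩ (fun i => u i - ε i y))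
    (hV : ∀ x y, V x y =
      ({j | yt j = y} : Finset J).inf' ⟨(hY y).choose, by simp [(hY y).choose_spec]⟩ (fun j => v j - η j x)) :
    (∀ i j, u i + v j ≥ Φ (xt i) (yt j) + ε i (yt j) + η j (xt i)) ↔
    (∀ x y, U x y + V x y ≥ Φ x y) := by
  constructor
  · intro h x y
    rw [hU, hV]
    obtain ⟨i, hi, hiU⟩ := Finset.exists_mem_eq_inf' (s := ({i | xt i = x} : Finset I)) ⟨(hX x).choose, by simp [(hX x).choose_spec]⟩ (fun i => u i - ε i y)
    obtain ⟨j, hj, hjV⟩ := Finset.exists_mem_eq_inf' (s := ({j | yt j = y} : Finset J)) ⟨(hY y).choose, by simp [(hY y).choose_spec]⟩ (fun j => v j - η j x)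
    rw [hiU, hjV]
    have := h i j
    have hxi : xt i = x := by simpa using hi
    have hyj : yt j = y := by simpa using hj
    rw [hxi, hyj] at this
    linarith
  · intro h i j
    have hxy := h (xt i) (yt j)
    rw [hU, hV] at hxy
    have hUle : ({i' | xt i' = xt i} : Finset I).inf' ⟨(hX (xt i)).choose, by simp [(hX (xt i)).choose_spec]⟩ (fun i' => u i' - ε i' (yt j)) ≤ u i - ε i (yt j) :=
      Finset.inf'_le _ (by simp)
    have hVle : ({j' | yt j' = yt j} : Finset J).inf' ⟨(hY (yt j)).choose, by simp [(hY (yt j)).choose_spec]⟩ (fun j' => v j' - η j' (xt i)) ≤ v j - η j (xt i) :=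
      Finset.inf'_le _ (by simp)
    linarith
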